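/- Let X be a median graph whose set of hyperplanes is partitioned as ⨆_{i ∈ I} ℋᵢ, and for each i let πᵢ : X → X\\ℋᵢᶜ denote the projection to the collapse of all hyperplanes not in ℋᵢ. Then d(x, y) = Σ_{i ∈ I} d(πᵢ(x), πᵢ(y)) for all vertices x, y of X. -/

import Mathlib

open SimpleGraph

variable {V : Type*}

/-- Triangle condition of weak modularity. -/
def TriangleCond (X : SimpleGraph V) : Prop :=
  ∀ o x y : V, X.Adj x y → X.dist o x = X.dist o y →
    ∃ w : V, X.Adj w x ∧ X.Adj w y ∧ X.dist o w + 1 = X.dist o x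

/-- Quadrangle condition of weak modularity. -/
def QuadCond (X : SimpleGraph V) : Prop :=
  ∀ o x y z : V, X.Adj z x → X.Adj z y → X.dist x y = 2 →
    X.dist o z = X.dist o x + 1 → X.dist o z = X.dist o y + 1 →
    ∃ w : V, X.Adj w x ∧ X.Adj w y ∧ X.dist o w + 2 = X.dist o z

/-- No induced copy of the complete bipartite graph `K_{2,3}`. -/
def NoInducedK23 (X : SimpleGraph V) : Prop :=
  ¬ ∃ a b x y z : V, a ≠ b ∧ x ≠ y ∧ y ≠ z ∧ x ≠ z ∧
    X.Adj a x ∧ X.Adj a y ∧ X.Adj a z ∧ X.Adj b x ∧ X.Adj b y ∧ X.Adj b z ∧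
    ¬ X.Adj a b ∧ ¬ X.Adj x y ∧ ¬ X.Adj y z ∧ ¬ X.Adj x z

/-- No induced copy of `K₄` minus an edge. -/
def NoInducedK4minus (X : SimpleGraph V) : Prop :=
  ¬ ∃ a b c d : V, X.Adj a b ∧ X.Adj a c ∧ X.Adj a d ∧ X.Adj b c ∧ X.Adj b d ∧
    c ≠ d ∧ ¬ X.Adj c d

/-- A quasi-median graph: a connected weakly modular graph with no induced
`K_{2,3}` and no induced `K₄⁻`. -/
def QuasiMedian (X : SimpleGraph V) : Prop :=
  X.Connected ∧ TriangleCond X ∧ QuadCond X ∧ NoInducedK23 X ∧ NoInducedK4minus X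

/-- `m` lies on a geodesic from `a` to `b`. -/
def InInterval (X : SimpleGraph V) (a m b : V) : Prop :=
  X.dist a m + X.dist m b = X.dist a b

/-- `m` is a median of the triple `a, b, c`. -/
def IsMedianOf (X : SimpleGraph V) (m a b c : V) : Prop :=
  InInterval X a m b ∧ InInterval X b m c ∧ InInterval X a m c

/-- A median graph: connected, and every triple of vertices has a unique median. -/
def MedianGraph (X : SimpleGraph V) : Prop :=
  X.Connected ∧ ∀ a b c : V, ∃! m : V, IsMedianOf X m a b c

/-- The elementary relation on edges generating hyperplanes: two edges of a common
triangle, or opposite edges of an induced 4-cycle. -/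
def EdgeRel (X : SimpleGraph V) (e f : Sym2 V) : Prop :=
  (∃ a b c : V, X.Adj a b ∧ X.Adj b c ∧ X.Adj a c ∧ e = s(a, b) ∧ f = s(b, c)) ∨
  (∃ a b c d : V, X.Adj a b ∧ X.Adj b c ∧ X.Adj c d ∧ X.Adj d a ∧
    a ≠ c ∧ ¬ X.Adj a c ∧ b ≠ d ∧ ¬ X.Adj b d ∧ e = s(a, b) ∧ f = s(c, d))

/-- A hyperplane: an equivalence class of edges under the reflexive-transitive
closure of `EdgeRel`. -/
def IsHyperplane (X : SimpleGraph V) (J : Set (Sym2 V)) : Prop :=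
  ∃ e ∈ X.edgeSet, J = {f | Relation.ReflTransGen (EdgeRel X) e f}

/-- The hyperplane `J` separates `x` and `y`. -/
def SeparatesPts (X : SimpleGraph V) (J : Set (Sym2 V)) (x y : V) : Prop :=
  ¬ (X.deleteEdges J).Reachable x y

/-- A sector delimited by `J`: a connected component of `X` minus the edges of `J`. -/
def IsSectorOf (X : SimpleGraph V) (J : Set (Sym2 V)) (S : Set V) : Prop :=
  ∃ v : V, S = {w | (X.deleteEdges J).Reachable v w}

/-- A gated subset of vertices. -/
def IsGated (X : SimpleGraph V) (Y : Set V) : Prop :=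
  Y.Nonempty ∧ ∀ x : V, ∃ y ∈ Y, ∀ z ∈ Y, X.dist x z = X.dist x y + X.dist y z

/-- The gated hull of a set of vertices. -/
def GatedHull (X : SimpleGraph V) (A : Set V) : Set V :=
  ⋂₀ {Y : Set V | IsGated X Y ∧ A ⊆ Y}

/-- A polytope: the gated hull of a non-empty finite set of vertices. -/
def IsPolytope (X : SimpleGraph V) (P : Set V) : Prop :=
  ∃ A : Finset V, A.Nonempty ∧ P = GatedHull X (A : Set V)

/-- `HypOf X Y`: the hyperplanes separating two vertices of `Y` (the hyperplanes
crossing `Y`). -/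
def HypOf (X : SimpleGraph V) (Y : Set V) : Set (Set (Sym2 V)) :=
  {J | IsHyperplane X J ∧ ∃ a ∈ Y, ∃ b ∈ Y, SeparatesPts X J a b}

/-- The hyperplanes separating `A` from `B` (placing them in two distinct sectors). -/
def SepHyp (X : SimpleGraph V) (A B : Set V) : Set (Set (Sym2 V)) :=
  {J | IsHyperplane X J ∧ ∃ S T : Set V, IsSectorOf X J S ∧ IsSectorOf X J T ∧
    S ≠ T ∧ A ⊆ S ∧ B ⊆ T}

/-- The covering relation for polytopes: `P ⊊ Q` with no polytope strictly between. -/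
def PolyCover (X : SimpleGraph V) (P Q : Set V) : Prop :=
  IsPolytope X P ∧ IsPolytope X Q ∧ P ⊂ Q ∧
    ¬ ∃ R : Set V, IsPolytope X R ∧ P ⊂ R ∧ R ⊂ Q

abbrev PolyVert (X : SimpleGraph V) := {P : Set V // IsPolytope X P}

/-- The graph of polytopes: the covering graph of the inclusion poset of polytopes. -/
def PolyGraph (X : SimpleGraph V) : SimpleGraph (PolyVert X) where
  Adj P Q := PolyCover X P.val Q.val ∨ PolyCover X Q.val P.val
  symm := ⟨by intro P Q h; exact h.symm⟩
  loopless := ⟨by intro P h; rcases h with h | h <;> exact (ssubset_irrefl P.val) h.2.2.1⟩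

/-- Two hyperplanes are transverse: there is an induced 4-cycle whose two pairs of
opposite edges belong respectively to the two hyperplanes. -/
def Transverse (X : SimpleGraph V) (J₁ J₂ : Set (Sym2 V)) : Prop :=
  ∃ a b c d : V, X.Adj a b ∧ X.Adj b c ∧ X.Adj c d ∧ X.Adj d a ∧
    a ≠ c ∧ ¬ X.Adj a c ∧ b ≠ d ∧ ¬ X.Adj b d ∧
    s(a, b) ∈ J₁ ∧ s(c, d) ∈ J₁ ∧ s(b, c) ∈ J₂ ∧ s(d, a) ∈ J₂

/-- A prism: a polytope whose crossing hyperplanes are pairwise transverse (this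
characterises the gated subgraphs decomposing as finite products of cliques). -/
def IsPrism (X : SimpleGraph V) (P : Set V) : Prop :=
  IsPolytope X P ∧ ∀ J₁ ∈ HypOf X P, ∀ J₂ ∈ HypOf X P, J₁ ≠ J₂ → Transverse X J₁ J₂

/-- The covering relation for prisms. -/
def PrismCover (X : SimpleGraph V) (P Q : Set V) : Prop :=
  IsPrism X P ∧ IsPrism X Q ∧ P ⊂ Q ∧
    ¬ ∃ R : Set V, IsPrism X R ∧ P ⊂ R ∧ R ⊂ Q

abbrev PrismVert (X : SimpleGraph V) := {P : Set V // IsPrism X P}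

/-- The graph of prisms. -/
def PrismGraph (X : SimpleGraph V) : SimpleGraph (PrismVert X) where
  Adj P Q := PrismCover X P.val Q.val ∨ PrismCover X Q.val P.val
  symm := ⟨by intro P Q h; exact h.symm⟩
  loopless := ⟨by intro P h; rcases h with h | h <;> exact (ssubset_irrefl P.val) h.2.2.1⟩

/-- A convex set of vertices: closed under taking points on geodesics. -/
def IsConvexSet (X : SimpleGraph V) (Y : Set V) : Prop :=
  ∀ a ∈ Y, ∀ b ∈ Y, ∀ m : V, InInterval X a m b → m ∈ Y

/-- The convex hull of a set of vertices. -/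
def ConvHull (X : SimpleGraph V) (A : Set V) : Set V :=
  ⋂₀ {Y : Set V | IsConvexSet X Y ∧ A ⊆ Y}

/-- The subgraph of `X` induced on `Y` (kept on the same vertex set). -/
def RestrictTo (X : SimpleGraph V) (Y : Set V) : SimpleGraph V where
  Adj a b := X.Adj a b ∧ a ∈ Y ∧ b ∈ Y
  symm := ⟨by intro a b h; exact ⟨h.1.symm, h.2.2, h.2.1⟩⟩
  loopless := ⟨by intro a h; exact X.irrefl h.1⟩

/-- The setoid identifying the endpoints of every edge whose hyperplane lies
in `𝒥` (edge contraction). -/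
def collapseSetoid (X : SimpleGraph V) (𝒥 : Set (Set (Sym2 V))) : Setoid V :=
  Relation.EqvGen.setoid (fun x y => X.Adj x y ∧ ∃ J ∈ 𝒥, s(x, y) ∈ J)

/-- The hyperplane-collapse `X\\𝒥`, obtained by collapsing all edges belonging
to hyperplanes of `𝒥`. -/
def CollapseGraph (X : SimpleGraph V) (𝒥 : Set (Set (Sym2 V))) :
    SimpleGraph (Quotient (collapseSetoid X 𝒥)) :=
  SimpleGraph.fromRel (fun u v => ∃ x y : V, X.Adj x y ∧
    Quotient.mk (collapseSetoid X 𝒥) x = u ∧ Quotient.mk (collapseSetoid X 𝒥) y = v)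

set_option linter.unusedSectionVars false
namespace Stmt7Aux

open Relation

variable {X : SimpleGraph V}

/-- The hyperplane (edge class) of an edge. -/
def cls (X : SimpleGraph V) (e : Sym2 V) : Set (Sym2 V) :=
  {f | Relation.ReflTransGen (EdgeRel X) e f}

lemma edgeRel_symm : Symmetric (EdgeRel X) := by
  rintro e f (⟨a, b, c, hab, hbc, hac, he, hf⟩ |
    ⟨a, b, c, d, hab, hbc, hcd, hda, hac, hnac, hbd, hnbd, he, hf⟩)
  · exact Or.inl ⟨c, b, a, hbc.symm, hab.symm, hac.symm,
      by rw [hf, Sym2.eq_swap], by rw [he, Sym2.eq_swap]⟩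
  · exact Or.inr ⟨c, d, a, b, hcd, hda, hab, hbc, Ne.symm hac,
      fun h => hnac h.symm, Ne.symm hbd, fun h => hnbd h.symm, hf, he⟩

lemma rtg_symm {e f : Sym2 V} (h : ReflTransGen (EdgeRel X) e f) :
    ReflTransGen (EdgeRel X) f e :=
  by
    haveI : Std.Symm (EdgeRel X) := ⟨fun a b hab => edgeRel_symm hab⟩
    exact (Relation.ReflTransGen.symmetric (r := EdgeRel X)).symm _ _ h

lemma mem_cls_self (e : Sym2 V) : e ∈ cls X e := ReflTransGen.refl

lemma cls_eq_of_mem {e f : Sym2 V} (h : f ∈ cls X e) : cls X e = cls X f := by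
  ext g
  exact ⟨fun hg => (rtg_symm h).trans hg, fun hg => ReflTransGen.trans h hg⟩

lemma isHyperplane_cls {e : Sym2 V} (he : e ∈ X.edgeSet) : IsHyperplane X (cls X e) :=
  ⟨e, he, rfl⟩

lemma eq_cls_of_mem {J : Set (Sym2 V)} {f : Sym2 V} (hJ : IsHyperplane X J)
    (hf : f ∈ J) : J = cls X f := by
  obtain ⟨e, _, rfl⟩ := hJ
  exact cls_eq_of_mem hf

section Median

variable (hX : MedianGraph X)
include hX

lemma conn : X.Connected := hX.1

lemma dist_adj {u v : V} (h : X.Adj u v) : X.dist u v = 1 :=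
  SimpleGraph.dist_eq_one_iff_adj.mpr h

lemma eq_of_dist_eq_zero {u v : V} (h : X.dist u v = 0) : u = v :=
  (hX.1.dist_eq_zero_iff).mp h

/-- Median graphs are "bipartite-like": a vertex is never equidistant from the
two endpoints of an edge. -/
lemma dist_ne_of_adj {u v : V} (h : X.Adj u v) (w : V) :
    X.dist w u ≠ X.dist w v := by
  intro hEq
  obtain ⟨m, hm, -⟩ := hX.2 w u v
  obtain ⟨h1, h2, h3⟩ := hm
  rw [InInterval] at h1 h2 h3
  rw [dist_adj hX h] at h2
  rcases Nat.eq_zero_or_pos (X.dist u m) with h0 | h0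
  · have hmu : u = m := eq_of_dist_eq_zero hX h0
    subst hmu
    omega
  · have h1' : X.dist m v = 0 := by omega
    have hmv : m = v := eq_of_dist_eq_zero hX h1'
    subst hmv
    rw [dist_adj hX h.symm] at h1
    omega

end Median
end Stmt7Aux
namespace Stmt7Aux
section Median2
variable {X : SimpleGraph V} (hX : MedianGraph X)
include hX

lemma triangle_free {a b c : V} (hab : X.Adj a b) (hbc : X.Adj b c)
    (hac : X.Adj a c) : False :=
  dist_ne_of_adj hX hbc a (by rw [dist_adj hX hab, dist_adj hX hac])

lemma dist_step {u v : V} (h : X.Adj u v) (w : V) :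
    X.dist w v = X.dist w u + 1 ∨ X.dist w u = X.dist w v + 1 := by
  have h1 : X.dist w v ≤ X.dist w u + 1 := by
    calc X.dist w v ≤ X.dist w u + X.dist u v := hX.1.dist_triangle
    _ = X.dist w u + 1 := by rw [dist_adj hX h]
  have h2 : X.dist w u ≤ X.dist w v + 1 := by
    calc X.dist w u ≤ X.dist w v + X.dist v u := hX.1.dist_triangle
    _ = X.dist w v + 1 := by rw [dist_adj hX h.symm]
  have := dist_ne_of_adj hX h w
  omega

lemma dist_two {z p q : V} (hzp : X.Adj z p) (hzq : X.Adj z q) (hpq : p ≠ q)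
    (hnadj : ¬ X.Adj p q) : X.dist p q = 2 := by
  have hle : X.dist p q ≤ 2 := by
    calc X.dist p q ≤ X.dist p z + X.dist z q := hX.1.dist_triangle
    _ = 2 := by rw [dist_adj hX hzp.symm, dist_adj hX hzq]
  have h0 : X.dist p q ≠ 0 := fun h => hpq (eq_of_dist_eq_zero hX h)
  have h1 : X.dist p q ≠ 1 := fun h => hnadj (SimpleGraph.dist_eq_one_iff_adj.mp h)
  omega

/-- Quadrangle condition, derived from median uniqueness. -/
lemma quadM {o z p q : V} (hzp : X.Adj z p) (hzq : X.Adj z q) (hpq : p ≠ q)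
    (hnadj : ¬ X.Adj p q) (hp : X.dist o z = X.dist o p + 1)
    (hq : X.dist o z = X.dist o q + 1) :
    ∃ w : V, X.Adj w p ∧ X.Adj w q ∧ X.dist o w + 1 = X.dist o p := by
  obtain ⟨m, hm, -⟩ := hX.2 o p q
  obtain ⟨h1, h2, h3⟩ := hm
  rw [InInterval] at h1 h2 h3
  rw [dist_two hX hzp hzq hpq hnadj] at h2
  have hmp : X.dist p m ≠ 0 := by
    intro h0
    have : p = m := eq_of_dist_eq_zero hX h0
    subst this
    omega
  have hmq : X.dist m q ≠ 0 := by
    intro h0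
    have hq' : m = q := eq_of_dist_eq_zero hX h0
    subst hq'
    have hc : X.dist m p = X.dist p m := SimpleGraph.dist_comm
    have h00 : X.dist m m = 0 := SimpleGraph.dist_self
    omega
  have hpm1 : X.dist p m = 1 := by omega
  have hmq1 : X.dist m q = 1 := by omega
  refine ⟨m, (SimpleGraph.dist_eq_one_iff_adj.mp hpm1).symm,
    SimpleGraph.dist_eq_one_iff_adj.mp hmq1, by omega⟩

/-- Existence of a neighbour one step closer to a target. -/
lemma exists_adj_dist {a x : V} {n : ℕ} (h : X.dist a x = n + 1) :
    ∃ a' : V, X.Adj a a' ∧ X.dist a' x = n := by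
  obtain ⟨p, hp⟩ := (hX.1 a x).exists_walk_length_eq_dist
  cases p with
  | nil => rw [h] at hp; simp at hp
  | cons hadj q =>
      rename_i a'
      refine ⟨a', hadj, le_antisymm ?_ ?_⟩
      · have := SimpleGraph.dist_le q
        simp [h] at hp
        omega
      · have : X.dist a x ≤ X.dist a a' + X.dist a' x := hX.1.dist_triangle
        rw [dist_adj hX hadj] at this
        omega

end Median2
end Stmt7Aux
namespace Stmt7Aux
open Relation

/-- The halfspace of `x` relative to the edge `x y`. -/
def Wside (X : SimpleGraph V) (x y v : V) : Prop := X.dist v x < X.dist v y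

section Walls
variable {X : SimpleGraph V} (hX : MedianGraph X)
include hX

lemma dist_step' {a b : V} (h : X.Adj a b) (w : V) :
    X.dist b w = X.dist a w + 1 ∨ X.dist a w = X.dist b w + 1 := by
  have h1 : X.dist b w = X.dist w b := SimpleGraph.dist_comm
  have h2 : X.dist a w = X.dist w a := SimpleGraph.dist_comm
  rcases dist_step hX h w with h3 | h3 <;> omega

lemma wside_total {x y : V} (hxy : X.Adj x y) (v : V) :
    Wside X x y v ∨ Wside X y x v := by
  have := dist_ne_of_adj hX hxy v
  unfold Wside
  omega

lemma wside_disjoint {x y v : V} (h1 : Wside X x y v) (h2 : Wside X y x v) : False := by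
  unfold Wside at h1 h2; omega

lemma wside_succ {x y v : V} (hxy : X.Adj x y) (h : Wside X x y v) :
    X.dist v y = X.dist v x + 1 := by
  unfold Wside at h
  rcases dist_step hX hxy v with h3 | h3 <;> omega

/-- Distance profile of a wall-crossing edge. -/
lemma cross_dists {x y a b : V} (hxy : X.Adj x y) (hab : X.Adj a b)
    (ha : Wside X x y a) (hb : Wside X y x b) :
    X.dist a y = X.dist a x + 1 ∧ X.dist b x = X.dist a x + 1 ∧
      X.dist b y = X.dist a x := by
  have hay := wside_succ hX hxy ha
  have hby := wside_succ hX hxy.symm hb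
  have h1 := dist_step hX hab x
  have h2 := dist_step hX hab y
  have c1 : X.dist x a = X.dist a x := SimpleGraph.dist_comm
  have c2 : X.dist x b = X.dist b x := SimpleGraph.dist_comm
  have c3 : X.dist y a = X.dist a y := SimpleGraph.dist_comm
  have c4 : X.dist y b = X.dist b y := SimpleGraph.dist_comm
  unfold Wside at ha hb
  omega

/-- Djoković's lemma: every wall-crossing edge lies in the hyperplane of the
defining edge. -/
lemma cross_mem_cls {x y : V} (hxy : X.Adj x y) :
    ∀ n {a b : V}, X.dist a x = n → X.Adj a b → Wside X x y a → Wside X y x b →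
      ReflTransGen (EdgeRel X) s(x, y) s(a, b) := by
  intro n
  induction n using Nat.strong_induction_on with
  | _ n ih =>
    intro a b hn hab ha hb
    obtain ⟨hay, hbx, hby⟩ := cross_dists hX hxy hab ha hb
    rcases Nat.eq_zero_or_pos n with h0 | h0
    · subst h0
      have hax : a = x := eq_of_dist_eq_zero hX hn
      have hbyy : b = y := eq_of_dist_eq_zero hX (by omega)
      subst hax; subst hbyy
      exact ReflTransGen.refl
    · obtain ⟨m, hm⟩ : ∃ m, n = m + 1 := ⟨n - 1, by omega⟩
      subst hm
      obtain ⟨a', haa', ha'x⟩ := exists_adj_dist hX hn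
      have ha'y : X.dist a' y = m + 1 := by
        have h1 := dist_step hX hxy a'
        have h2 := dist_step' hX haa' y
        omega
      have ha'b : a' ≠ b := by
        intro h; rw [h] at ha'x; omega
      have hna'b : ¬ X.Adj a' b := fun h => triangle_free hX hab h.symm haa'
      -- quadrangle from y
      have cya : X.dist y a = X.dist a y := SimpleGraph.dist_comm
      have cya' : X.dist y a' = X.dist a' y := SimpleGraph.dist_comm
      have cyb : X.dist y b = X.dist b y := SimpleGraph.dist_comm
      obtain ⟨w, hwa', hwb, hw⟩ := quadM hX (o := y) haa' hab ha'b hna'b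
        (by omega) (by omega)
      have hwy : X.dist w y = m := by
        have : X.dist y w = X.dist w y := SimpleGraph.dist_comm
        omega
      have hwx : X.dist w x = m + 1 := by
        have h1 := dist_step' hX hwa'.symm x
        have h2 := dist_step' hX hwb.symm x
        have c1 : X.dist a' x = X.dist a' x := rfl
        omega
      have hstep : ReflTransGen (EdgeRel X) s(x, y) s(a', w) :=
        ih m (by omega) ha'x hwa'.symm (by unfold Wside; omega) (by unfold Wside; omega)
      refine hstep.tail (Or.inr ⟨a', w, b, a, hwa'.symm, hwb, hab.symm, haa',
        ha'b, hna'b, ?_, ?_, rfl, Sym2.eq_swap⟩)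
      · intro h; rw [h] at hwy; omega
      · intro h; exact triangle_free hX hab hwb.symm h.symm
  end Walls
end Stmt7Aux
namespace Stmt7Aux
open Relation

/-- The edge `e` crosses the wall of the edge `x y`. -/
def Crosses (X : SimpleGraph V) (x y : V) (e : Sym2 V) : Prop :=
  ∃ a b : V, e = s(a, b) ∧ X.Adj a b ∧ Wside X x y a ∧ Wside X y x b

section Squares
variable {X : SimpleGraph V} (hX : MedianGraph X)
include hX

/-- In an induced square a-b-c-d with the edge a-b crossing the wall of x-y,
the vertices c and d cannot both lie on the x-side. -/
lemma square_sides {x y a b c d : V} (hxy : X.Adj x y) (hab : X.Adj a b)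
    (hbc : X.Adj b c) (hcd : X.Adj c d) (hda : X.Adj d a)
    (hac : a ≠ c) (hnac : ¬ X.Adj a c) (hbd : b ≠ d) (hnbd : ¬ X.Adj b d)
    (ha : Wside X x y a) (hb : Wside X y x b)
    (hc : Wside X x y c) (hd : Wside X x y d) : False := by
  obtain ⟨hay, hbx, hby⟩ := cross_dists hX hxy hab ha hb
  -- distances of c
  have s1 := dist_step' hX hbc x
  have s2 := dist_step' hX hbc y
  have s3 := dist_step hX hxy c
  have hcx : X.dist c x = X.dist a x := by unfold Wside at hc; omega
  have hcy : X.dist c y = X.dist a x + 1 := by unfold Wside at hc; omega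
  -- distances of d
  have t1 := dist_step' hX hda x
  have t2 := dist_step' hX hda y
  have t3 := dist_step hX hxy d
  unfold Wside at hd
  have hdcase : (X.dist d x = X.dist a x - 1 ∧ X.dist d y = X.dist a x ∧ 1 ≤ X.dist a x)
      ∨ (X.dist d x = X.dist a x + 1 ∧ X.dist d y = X.dist a x + 2) := by
    omega
  rcases hdcase with ⟨hdx, hdy, hpos⟩ | ⟨hdx, hdy⟩
  · -- quadrangle from y at a with neighbours b and d
    have c1 : X.dist y a = X.dist a y := SimpleGraph.dist_comm
    have c2 : X.dist y b = X.dist b y := SimpleGraph.dist_comm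
    have c3 : X.dist y d = X.dist d y := SimpleGraph.dist_comm
    obtain ⟨w, hwb, hwd, hw⟩ := quadM hX (o := y) hab hda.symm hbd hnbd
      (by omega) (by omega)
    have hwy : X.dist w y = X.dist a x - 1 := by
      have : X.dist y w = X.dist w y := SimpleGraph.dist_comm
      omega
    have hbw : b ≠ w := by
      intro h; rw [← h] at hwy; omega
    have hdw : d ≠ w := by
      intro h; rw [← h] at hwy; omega
    have hnaw : ¬ X.Adj a w := fun h => triangle_free hX hab hwb.symm h
    have hncw : ¬ X.Adj c w := fun h => triangle_free hX hbc.symm hwb.symm h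
    have haw : a ≠ w := by intro h; rw [← h] at hwy; omega
    have hcw : c ≠ w := by intro h; rw [← h] at hwy; omega
    have dac : X.dist a c = 2 := dist_two hX hab.symm hbc hac hnac
    have daw : X.dist a w = 2 := dist_two hX hab.symm hwb.symm haw hnaw
    have dcw : X.dist c w = 2 := dist_two hX hbc hwb.symm hcw hncw
    have d1 : X.dist a b = 1 := dist_adj hX hab
    have d2 : X.dist b c = 1 := dist_adj hX hbc
    have d3 : X.dist c b = 1 := dist_adj hX hbc.symm
    have d4 : X.dist b w = 1 := dist_adj hX hwb.symm
    have d5 : X.dist a d = 1 := dist_adj hX hda.symm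
    have d6 : X.dist d c = 1 := dist_adj hX hcd.symm
    have d7 : X.dist c d = 1 := dist_adj hX hcd
    have d8 : X.dist d w = 1 := dist_adj hX hwd.symm
    obtain ⟨mm, -, huniq⟩ := hX.2 a c w
    have e1 : b = mm := huniq b ⟨by rw [InInterval]; omega, by rw [InInterval]; omega,
      by rw [InInterval]; omega⟩
    have e2 : d = mm := huniq d ⟨by rw [InInterval]; omega, by rw [InInterval]; omega,
      by rw [InInterval]; omega⟩
    exact hbd (e1.trans e2.symm)
  · -- quadrangle from x at b with neighbours a and c
    have c1 : X.dist x b = X.dist b x := SimpleGraph.dist_comm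
    have c2 : X.dist x a = X.dist a x := SimpleGraph.dist_comm
    have c3 : X.dist x c = X.dist c x := SimpleGraph.dist_comm
    obtain ⟨w, hwa, hwc, hw⟩ := quadM hX (o := x) hab.symm hbc hac hnac
      (by omega) (by omega)
    have hwx : X.dist w x = X.dist a x - 1 := by
      have : X.dist x w = X.dist w x := SimpleGraph.dist_comm
      omega
    have hpos : 1 ≤ X.dist a x := by
      by_contra h
      have h0 : X.dist a x = 0 := by omega
      have hax2 : a = x := eq_of_dist_eq_zero hX h0
      have hcx0 : c = x := eq_of_dist_eq_zero hX (by omega)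
      exact hac (hax2.trans hcx0.symm)
    have haw : a ≠ w := by intro h; rw [← h] at hwx; omega
    have hcw : c ≠ w := by intro h; rw [← h] at hwx; omega
    have hbw : b ≠ w := by intro h; rw [← h] at hwx; omega
    have hdw : d ≠ w := by intro h; rw [← h] at hwx; omega
    have hnbw : ¬ X.Adj b w := fun h => triangle_free hX hab.symm hwa.symm h
    have hndw : ¬ X.Adj d w := fun h => triangle_free hX hda hwa.symm h
    have dbd : X.dist b d = 2 := dist_two hX hab hda.symm hbd hnbd
    have dbw : X.dist b w = 2 := dist_two hX hab hwa.symm hbw hnbw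
    have ddw : X.dist d w = 2 := dist_two hX hda.symm hwa.symm hdw hndw
    have d1 : X.dist b a = 1 := dist_adj hX hab.symm
    have d2 : X.dist a d = 1 := dist_adj hX hda.symm
    have d3 : X.dist a w = 1 := dist_adj hX hwa.symm
    have d4 : X.dist b c = 1 := dist_adj hX hbc
    have d5 : X.dist c d = 1 := dist_adj hX hcd
    have d6 : X.dist c w = 1 := dist_adj hX hwc.symm
    have d7 : X.dist d a = 1 := dist_adj hX hda
    have d8 : X.dist d c = 1 := dist_adj hX hcd.symm
    obtain ⟨mm, -, huniq⟩ := hX.2 b d w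
    have e1 : a = mm := huniq a ⟨by rw [InInterval]; omega, by rw [InInterval]; omega,
      by rw [InInterval]; omega⟩
    have e2 : c = mm := huniq c ⟨by rw [InInterval]; omega, by rw [InInterval]; omega,
      by rw [InInterval]; omega⟩
    exact hac (e1.trans e2.symm)
  end Squares
end Stmt7Aux
namespace Stmt7Aux
open Relation
section Cross
variable {X : SimpleGraph V} (hX : MedianGraph X)
include hX

lemma square_cross {x y p q r t : V} (hxy : X.Adj x y) (hpq : X.Adj p q)
    (hqr : X.Adj q r) (hrt : X.Adj r t) (htp : X.Adj t p)
    (hpr : p ≠ r) (hnpr : ¬ X.Adj p r) (hqt : q ≠ t) (hnqt : ¬ X.Adj q t)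
    (hp : Wside X x y p) (hq : Wside X y x q) : Crosses X x y s(r, t) := by
  rcases wside_total hX hxy r with hr | hr <;> rcases wside_total hX hxy t with ht | ht
  · exact absurd (square_sides hX hxy hpq hqr hrt htp hpr hnpr hqt hnqt hp hq hr ht) id
  · exact ⟨r, t, rfl, hrt, hr, ht⟩
  · exact ⟨t, r, Sym2.eq_swap.symm, hrt.symm, ht, hr⟩
  · exact absurd (square_sides hX hxy.symm hpq.symm
      (htp.symm) (hrt.symm) (hqr.symm) hqt hnqt hpr hnpr
      hq hp ht hr) id

lemma crosses_of_rel {x y : V} (hxy : X.Adj x y) {e f : Sym2 V}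
    (he : Crosses X x y e) (hef : EdgeRel X e f) : Crosses X x y f := by
  obtain ⟨a, b, hab2, hab, ha, hb⟩ := he
  rcases hef with ⟨p, q, r, hpq, hqr, hpr, he', hf'⟩ | 
    ⟨p, q, r, t, hpq, hqr, hrt, htp, hpr, hnpr, hqt, hnqt, he', hf'⟩
  · exact absurd (triangle_free hX hpq hqr hpr) id
  · subst hf'
    rw [he', Sym2.eq_iff] at hab2
    rcases hab2 with ⟨rfl, rfl⟩ | ⟨rfl, rfl⟩
    · exact square_cross hX hxy hpq hqr hrt htp hpr hnpr hqt hnqt ha hb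
    · have := square_cross hX hxy hpq.symm htp.symm hrt.symm hqr.symm
        hqt hnqt hpr hnpr ha hb
      obtain ⟨u, v, huv, h1, h2, h3⟩ := this
      exact ⟨u, v, by rw [← huv, Sym2.eq_swap], h1, h2, h3⟩

lemma cls_crosses {x y : V} (hxy : X.Adj x y) {f : Sym2 V}
    (hf : f ∈ cls X s(x, y)) : Crosses X x y f := by
  have base : Crosses X x y s(x, y) := by
    refine ⟨x, y, rfl, hxy, ?_, ?_⟩ <;> unfold Wside
    · rw [SimpleGraph.dist_self, dist_adj hX hxy]; omega
    · rw [SimpleGraph.dist_self, dist_adj hX hxy.symm]; omega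
  induction hf with
  | refl => exact base
  | tail h1 h2 ih => exact crosses_of_rel hX hxy ih h2
end Cross
end Stmt7Aux
namespace Stmt7Aux
open Relation

/-- The hyperplanes separating `x` from `y`. -/
def SepSet (X : SimpleGraph V) (x y : V) : Set (Set (Sym2 V)) :=
  {J | IsHyperplane X J ∧ SeparatesPts X J x y}

section Sep
variable {X : SimpleGraph V} (hX : MedianGraph X)
include hX

lemma walk_side {x y : V} (hxy : X.Adj x y) {u v : V}
    (p : (X.deleteEdges (cls X s(x, y))).Walk u v) :
    Wside X x y u → Wside X x y v := by
  induction p with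
  | nil => exact id
  | @cons a b c h q ih =>
    intro hu
    rw [SimpleGraph.deleteEdges_adj] at h
    rcases wside_total hX hxy b with hb | hb
    · exact ih hb
    · exact absurd (cross_mem_cls hX hxy (X.dist a x) rfl h.1 hu hb) h.2

lemma sep_of_sides {x y u v : V} (hxy : X.Adj x y) (hu : Wside X x y u)
    (hv : Wside X y x v) : SeparatesPts X (cls X s(x, y)) u v := by
  rintro ⟨p⟩
  exact wside_disjoint hX (walk_side hX hxy p hu) hv

lemma not_sep_of_not_mem {J : Set (Sym2 V)} {u v : V} (huv : X.Adj u v)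
    (h : s(u, v) ∉ J) : ¬ SeparatesPts X J u v := by
  intro hsep
  exact hsep (SimpleGraph.Adj.reachable (by rw [SimpleGraph.deleteEdges_adj]; exact ⟨huv, h⟩))

lemma side_x {x v : V} (hxv : X.Adj x v) : Wside X x v x := by
  unfold Wside
  rw [SimpleGraph.dist_self, dist_adj hX hxv]
  omega

lemma sep_edge {x v : V} (hxv : X.Adj x v) :
    SeparatesPts X (cls X s(x, v)) x v :=
  sep_of_sides hX hxv (side_x hX hxv) (side_x hX hxv.symm)

lemma sep_edge_iff {J : Set (Sym2 V)} {x v : V} (hJ : IsHyperplane X J)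
    (hxv : X.Adj x v) : SeparatesPts X J x v ↔ J = cls X s(x, v) := by
  constructor
  · intro hsep
    by_contra hne
    refine not_sep_of_not_mem hX hxv (fun hmem => hne ?_) hsep
    exact eq_cls_of_mem hJ hmem
  · rintro rfl
    exact sep_edge hX hxv

lemma geo_avoid {x v y : V} (hxv : X.Adj x v) (hd : X.dist x y = X.dist v y + 1) :
    ∀ {u : V} (p : X.Walk u y), X.dist v u + p.length = X.dist v y →
      ∀ e ∈ p.edges, e ∉ cls X s(x, v) := by
  intro u p
  induction p with
  | nil => intro _ e he; simp at he
  | @cons a b c h q ih =>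
    intro hlen e he hecls
    have hq : X.dist v b + q.length = X.dist v c := by
      have h1 : X.dist v b ≤ X.dist v a + 1 := by
        have := hX.1.dist_triangle (u := v) (v := a) (w := b)
        rw [dist_adj hX h] at this
        omega
      have h2 : X.dist v c ≤ X.dist v b + q.length := by
        have := hX.1.dist_triangle (u := v) (v := b) (w := c)
        have := SimpleGraph.dist_le q
        omega
      simp only [SimpleGraph.Walk.length_cons] at hlen
      omega
    have sidea : Wside X v x a := by
      have hub : X.dist a c ≤ q.length + 1 := by
        have := SimpleGraph.dist_le (SimpleGraph.Walk.cons h q)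
        simpa using this
      have hxy2 : X.dist x c ≤ X.dist x a + X.dist a c := hX.1.dist_triangle
      have c1 : X.dist x a = X.dist a x := SimpleGraph.dist_comm
      have c2 : X.dist v a = X.dist a v := SimpleGraph.dist_comm
      have := dist_step' hX hxv a
      unfold Wside
      simp only [SimpleGraph.Walk.length_cons] at hlen
      omega
    have sideb : Wside X v x b := by
      have hub : X.dist b c ≤ q.length := SimpleGraph.dist_le q
      have hxy2 : X.dist x c ≤ X.dist x b + X.dist b c := hX.1.dist_triangle
      have c1 : X.dist x b = X.dist b x := SimpleGraph.dist_comm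
      have c2 : X.dist v b = X.dist b v := SimpleGraph.dist_comm
      have := dist_step' hX hxv b
      unfold Wside
      omega
    simp only [SimpleGraph.Walk.edges_cons, List.mem_cons] at he
    rcases he with rfl | he
    · obtain ⟨a', b', hee, -, ha', hb'⟩ := cls_crosses hX hxv hecls
      rw [Sym2.eq_iff] at hee
      rcases hee with ⟨rfl, rfl⟩ | ⟨rfl, rfl⟩
      · exact wside_disjoint hX ha' sidea
      · exact wside_disjoint hX ha' sideb
    · exact ih hd hq e he hecls

lemma not_sep_geo {x v y : V} (hxv : X.Adj x v) (hd : X.dist x y = X.dist v y + 1) :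
    ¬ SeparatesPts X (cls X s(x, v)) v y := by
  intro hsep
  obtain ⟨p, hp⟩ := (hX.1 v y).exists_walk_length_eq_dist
  have havoid := geo_avoid hX hxv hd p (by rw [hp, SimpleGraph.dist_self]; omega)
  refine hsep ⟨p.transfer _ fun e he => ?_⟩
  rw [SimpleGraph.edgeSet_deleteEdges]
  exact ⟨p.edges_subset_edgeSet he, havoid e he⟩

lemma sep_insert {x v y : V} (hxv : X.Adj x v) (hd : X.dist x y = X.dist v y + 1) :
    SepSet X x y = insert (cls X s(x, v)) (SepSet X v y) ∧
      cls X s(x, v) ∉ SepSet X v y := by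
  have hJ0 : IsHyperplane X (cls X s(x, v)) := isHyperplane_cls hxv
  constructor
  · ext J
    simp only [SepSet, Set.mem_setOf_eq, Set.mem_insert_iff]
    constructor
    · rintro ⟨hJ, hsep⟩
      by_cases hE : J = cls X s(x, v)
      · exact Or.inl hE
      · refine Or.inr ⟨hJ, fun hr => hsep ?_⟩
        have hxvr : (X.deleteEdges J).Reachable x v := by
          refine SimpleGraph.Adj.reachable ?_
          rw [SimpleGraph.deleteEdges_adj]
          exact ⟨hxv, fun hmem => hE (eq_cls_of_mem hJ hmem)⟩
        exact hxvr.trans hr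
    · rintro (rfl | ⟨hJ, hsep⟩)
      · refine ⟨hJ0, ?_⟩
        have hy : Wside X v x y := by
          unfold Wside
          have c1 : X.dist y v = X.dist v y := SimpleGraph.dist_comm
          have c2 : X.dist y x = X.dist x y := SimpleGraph.dist_comm
          omega
        exact sep_of_sides hX hxv (side_x hX hxv) hy
      · refine ⟨hJ, fun hr => ?_⟩
        by_cases hE : s(x, v) ∈ J
        · exact not_sep_geo hX hxv hd (by rw [← eq_cls_of_mem hJ hE]; exact hsep)
        · have hxvr : (X.deleteEdges J).Reachable x v := by
            refine SimpleGraph.Adj.reachable ?_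
            rw [SimpleGraph.deleteEdges_adj]
            exact ⟨hxv, hE⟩
          exact hsep (hxvr.symm.trans hr)
  · rintro ⟨-, hsep⟩
    exact not_sep_geo hX hxv hd hsep

lemma sepSet_self (x : V) : SepSet X x x = ∅ := by
  ext J
  simp only [SepSet, Set.mem_setOf_eq, Set.mem_empty_iff_false, iff_false, not_and]
  intro _
  intro hsep
  exact hsep (SimpleGraph.Reachable.refl x)

lemma sepSet_spec : ∀ (n : ℕ) (x y : V), X.dist x y = n →
    (SepSet X x y).Finite ∧ (SepSet X x y).ncard = n := by
  intro n
  induction n with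
  | zero =>
    intro x y h
    have : x = y := eq_of_dist_eq_zero hX h
    subst this
    rw [sepSet_self hX]
    simp
  | succ m ih =>
    intro x y h
    obtain ⟨v, hxv, hvy⟩ := exists_adj_dist hX h
    obtain ⟨heq, hnot⟩ := sep_insert hX (y := y) hxv (by omega)
    obtain ⟨hfin, hcard⟩ := ih v y hvy
    rw [heq]
    exact ⟨hfin.insert _, by rw [Set.ncard_insert_of_notMem hnot hfin, hcard]⟩

/-- Distance equals the number of separating hyperplanes. -/
lemma dist_eq_ncard_sepSet (x y : V) : X.dist x y = (SepSet X x y).ncard :=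
  ((sepSet_spec hX (X.dist x y) x y rfl).2).symm

lemma sepSet_finite (x y : V) : (SepSet X x y).Finite :=
  (sepSet_spec hX (X.dist x y) x y rfl).1

end Sep
end Stmt7Aux
namespace Stmt7Aux
open Relation

/-- The family of hyperplanes collapsed by the `i`-th projection. -/
abbrev Jc {I : Type*} (X : SimpleGraph V) (ℋ : I → Set (Set (Sym2 V))) (i : I) :
    Set (Set (Sym2 V)) :=
  {J | IsHyperplane X J ∧ J ∉ ℋ i}

section Collapse
variable {X : SimpleGraph V} {I : Type*} (ℋ : I → Set (Set (Sym2 V)))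

lemma mk_eq_of_mem {i : I} {u v : V} (huv : X.Adj u v) {J' : Set (Sym2 V)}
    (hJ' : J' ∈ Jc X ℋ i) (hmem : s(u, v) ∈ J') :
    Quotient.mk (collapseSetoid X (Jc X ℋ i)) u =
      Quotient.mk (collapseSetoid X (Jc X ℋ i)) v :=
  Quotient.sound (Relation.EqvGen.rel u v ⟨huv, J', hJ', hmem⟩)

lemma reach_of_equiv (hhyp : ∀ i, ∀ J ∈ ℋ i, IsHyperplane X J) {i : I} {J : Set (Sym2 V)} (hJi : J ∈ ℋ i) {u v : V}
    (h0 : (collapseSetoid X (Jc X ℋ i)) u v) : (X.deleteEdges J).Reachable u v := by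
  have h' : Relation.EqvGen
      (fun x y => X.Adj x y ∧ ∃ J' ∈ Jc X ℋ i, s(x, y) ∈ J') u v := h0
  clear h0
  induction h' with
  | rel a b hab =>
    obtain ⟨hadj, J', ⟨hJ'h, hJ'n⟩, hmem⟩ := hab
    refine SimpleGraph.Adj.reachable ?_
    rw [SimpleGraph.deleteEdges_adj]
    refine ⟨hadj, fun hmemJ => ?_⟩
    have h1 := eq_cls_of_mem (hhyp i J hJi) hmemJ
    have h2 := eq_cls_of_mem hJ'h hmem
    exact hJ'n ((h2.trans h1.symm) ▸ hJi)
  | refl a => exact SimpleGraph.Reachable.refl a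
  | symm a b _ ih => exact ih.symm
  | trans a b c _ _ ih1 ih2 => exact ih1.trans ih2

lemma adj_or_eq {i : I} {u v : V} (h : X.Adj u v) :
    Quotient.mk (collapseSetoid X (Jc X ℋ i)) u =
        Quotient.mk (collapseSetoid X (Jc X ℋ i)) v ∨
      (CollapseGraph X (Jc X ℋ i)).Adj (Quotient.mk (collapseSetoid X (Jc X ℋ i)) u)
        (Quotient.mk (collapseSetoid X (Jc X ℋ i)) v) := by
  by_cases he : Quotient.mk (collapseSetoid X (Jc X ℋ i)) u =
      Quotient.mk (collapseSetoid X (Jc X ℋ i)) v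
  · exact Or.inl he
  · refine Or.inr ?_
    simp only [CollapseGraph, SimpleGraph.fromRel_adj]
    exact ⟨he, Or.inl ⟨u, v, h, rfl, rfl⟩⟩

lemma collapse_reach (hX : MedianGraph X) {i : I} (u v : V) :
    (CollapseGraph X (Jc X ℋ i)).Reachable
      (Quotient.mk (collapseSetoid X (Jc X ℋ i)) u)
      (Quotient.mk (collapseSetoid X (Jc X ℋ i)) v) := by
  obtain ⟨p⟩ := hX.1 u v
  induction p with
  | nil => exact SimpleGraph.Reachable.refl _
  | @cons a b c h q ih =>
    rcases adj_or_eq (ℋ := ℋ) (i := i) h with heq | hadj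
    · rw [heq]; exact ih
    · exact hadj.reachable.trans ih

lemma collapse_connected (hX : MedianGraph X) (i : I) :
    (CollapseGraph X (Jc X ℋ i)).Connected := by
  have hne : Nonempty V := hX.1.nonempty
  rw [SimpleGraph.connected_iff]
  refine ⟨fun a b => ?_, Nonempty.map (Quotient.mk (collapseSetoid X (Jc X ℋ i))) hne⟩
  induction a, b using Quotient.inductionOn₂ with
  | h u v => exact collapse_reach ℋ hX u v

lemma card_le_walk (hhyp : ∀ i, ∀ J ∈ ℋ i, IsHyperplane X J) {i : I} : ∀ {P Q : Quotient (collapseSetoid X (Jc X ℋ i))}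
    (p : (CollapseGraph X (Jc X ℋ i)).Walk P Q) (u v : V),
    Quotient.mk (collapseSetoid X (Jc X ℋ i)) u = P →
    Quotient.mk (collapseSetoid X (Jc X ℋ i)) v = Q →
    {J | J ∈ ℋ i ∧ SeparatesPts X J u v}.Finite ∧
      {J | J ∈ ℋ i ∧ SeparatesPts X J u v}.ncard ≤ p.length := by
  intro P Q p
  induction p with
  | nil =>
    intro u v hu hv
    have hequiv : (collapseSetoid X (Jc X ℋ i)) u v := Quotient.exact (hu.trans hv.symm)
    have hempty : {J | J ∈ ℋ i ∧ SeparatesPts X J u v} = ∅ := by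
      ext J
      simp only [Set.mem_setOf_eq, Set.mem_empty_iff_false, iff_false, not_and]
      intro hJi hsep
      exact hsep (reach_of_equiv ℋ hhyp hJi hequiv)
    rw [hempty]
    simp
  | @cons P R Q h q ih =>
    intro u v hu hv
    have h' := h
    simp only [CollapseGraph, SimpleGraph.fromRel_adj] at h'
    obtain ⟨hne, hw⟩ := h'
    have hmain : ∃ a b : V, X.Adj a b ∧
        Quotient.mk (collapseSetoid X (Jc X ℋ i)) a = P ∧
        Quotient.mk (collapseSetoid X (Jc X ℋ i)) b = R := by
      rcases hw with ⟨a, b, hab, h1, h2⟩ | ⟨a, b, hab, h1, h2⟩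
      · exact ⟨a, b, hab, h1, h2⟩
      · exact ⟨b, a, hab.symm, h2, h1⟩
    obtain ⟨a, b, hab, hP, hR⟩ := hmain
    obtain ⟨hfin, hcard⟩ := ih b v hR hv
    have hsub : {J | J ∈ ℋ i ∧ SeparatesPts X J u v} ⊆
        insert (cls X s(a, b)) {J | J ∈ ℋ i ∧ SeparatesPts X J b v} := by
      rintro J ⟨hJi, hJsep⟩
      by_cases hmem : s(a, b) ∈ J
      · exact Set.mem_insert_iff.mpr (Or.inl (eq_cls_of_mem (hhyp i J hJi) hmem))
      · refine Set.mem_insert_iff.mpr (Or.inr ⟨hJi, fun hr => hJsep ?_⟩)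
        have hua : (X.deleteEdges J).Reachable u a :=
          reach_of_equiv ℋ hhyp hJi (Quotient.exact (hu.trans hP.symm))
        have hab' : (X.deleteEdges J).Reachable a b :=
          SimpleGraph.Adj.reachable (by rw [SimpleGraph.deleteEdges_adj]; exact ⟨hab, hmem⟩)
        exact (hua.trans hab').trans hr
    constructor
    · exact (hfin.insert _).subset hsub
    · calc {J | J ∈ ℋ i ∧ SeparatesPts X J u v}.ncard
          ≤ (insert (cls X s(a, b)) {J | J ∈ ℋ i ∧ SeparatesPts X J b v}).ncard :=
            Set.ncard_le_ncard hsub (hfin.insert _)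
        _ ≤ {J | J ∈ ℋ i ∧ SeparatesPts X J b v}.ncard + 1 := Set.ncard_insert_le _ _
        _ ≤ q.length + 1 := by omega
        _ = (SimpleGraph.Walk.cons h q).length := by simp

lemma sepI_le_dist (hX : MedianGraph X) (hhyp : ∀ i, ∀ J ∈ ℋ i, IsHyperplane X J) (i : I) (x y : V) :
    {J | J ∈ ℋ i ∧ SeparatesPts X J x y}.ncard ≤
      (CollapseGraph X (Jc X ℋ i)).dist
        (Quotient.mk (collapseSetoid X (Jc X ℋ i)) x)
        (Quotient.mk (collapseSetoid X (Jc X ℋ i)) y) := by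
  obtain ⟨p, hp⟩ := (collapse_reach ℋ hX x y (i := i)).exists_walk_length_eq_dist
  have := card_le_walk ℋ hhyp p x y rfl rfl
  omega

lemma dist_le_sepI (hX : MedianGraph X) (hhyp : ∀ i, ∀ J ∈ ℋ i, IsHyperplane X J) (i : I) : ∀ (n : ℕ) (x y : V), X.dist x y = n →
    (CollapseGraph X (Jc X ℋ i)).dist
        (Quotient.mk (collapseSetoid X (Jc X ℋ i)) x)
        (Quotient.mk (collapseSetoid X (Jc X ℋ i)) y) ≤
      {J | J ∈ ℋ i ∧ SeparatesPts X J x y}.ncard := by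
  intro n
  induction n with
  | zero =>
    intro x y h
    have : x = y := eq_of_dist_eq_zero hX h
    subst this
    simp [SimpleGraph.dist_self]
  | succ m ihn =>
    intro x y h
    obtain ⟨v, hxv, hvy⟩ := exists_adj_dist hX h
    obtain ⟨heq, hnot⟩ := sep_insert hX (y := y) hxv (by omega)
    have hinter : ∀ u w : V, {J | J ∈ ℋ i ∧ SeparatesPts X J u w} =
        SepSet X u w ∩ ℋ i := by
      intro u w
      ext J
      simp only [Set.mem_setOf_eq, SepSet, Set.mem_inter_iff]
      exact ⟨fun ⟨h1, h2⟩ => ⟨⟨hhyp i J h1, h2⟩, h1⟩, fun ⟨⟨_, h2⟩, h1⟩ => ⟨h1, h2⟩⟩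
    have hJ0 : IsHyperplane X (cls X s(x, v)) := isHyperplane_cls hxv
    have hfinv : (SepSet X v y ∩ ℋ i).Finite := (sepSet_finite hX v y).inter_of_left _
    by_cases hmem : cls X s(x, v) ∈ ℋ i
    · -- the class of the first edge survives in the collapse
      have hcard : {J | J ∈ ℋ i ∧ SeparatesPts X J x y}.ncard =
          {J | J ∈ ℋ i ∧ SeparatesPts X J v y}.ncard + 1 := by
        rw [hinter, hinter, heq, Set.insert_inter_of_mem hmem,
          Set.ncard_insert_of_notMem (fun hc => hnot ((Set.mem_inter_iff _ _ _).mp hc).1) hfinv]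
      rw [hcard]
      have h1 : (CollapseGraph X (Jc X ℋ i)).dist
          (Quotient.mk (collapseSetoid X (Jc X ℋ i)) x)
          (Quotient.mk (collapseSetoid X (Jc X ℋ i)) v) ≤ 1 := by
        rcases adj_or_eq (ℋ := ℋ) (i := i) hxv with heq2 | hadj
        · rw [heq2, SimpleGraph.dist_self]; omega
        · have := SimpleGraph.dist_le hadj.toWalk
          simpa using this
      calc (CollapseGraph X (Jc X ℋ i)).dist _ _
          ≤ (CollapseGraph X (Jc X ℋ i)).dist
              (Quotient.mk (collapseSetoid X (Jc X ℋ i)) x)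
              (Quotient.mk (collapseSetoid X (Jc X ℋ i)) v) +
            (CollapseGraph X (Jc X ℋ i)).dist
              (Quotient.mk (collapseSetoid X (Jc X ℋ i)) v)
              (Quotient.mk (collapseSetoid X (Jc X ℋ i)) y) :=
            (collapse_connected ℋ hX i).dist_triangle
        _ ≤ {J | J ∈ ℋ i ∧ SeparatesPts X J v y}.ncard + 1 := by
            have := ihn v y hvy
            omega
    · -- the first edge is collapsed
      have hmk : Quotient.mk (collapseSetoid X (Jc X ℋ i)) x =
          Quotient.mk (collapseSetoid X (Jc X ℋ i)) v :=
        mk_eq_of_mem (ℋ := ℋ) hxv ⟨hJ0, hmem⟩ (mem_cls_self _)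
      have hcard : {J | J ∈ ℋ i ∧ SeparatesPts X J x y} =
          {J | J ∈ ℋ i ∧ SeparatesPts X J v y} := by
        rw [hinter, hinter, heq, Set.insert_inter_of_notMem hmem]
      rw [hmk, hcard]
      exact ihn v y hvy

lemma dist_collapse_eq (hX : MedianGraph X) (hhyp : ∀ i, ∀ J ∈ ℋ i, IsHyperplane X J) (i : I) (x y : V) :
    (CollapseGraph X (Jc X ℋ i)).dist
        (Quotient.mk (collapseSetoid X (Jc X ℋ i)) x)
        (Quotient.mk (collapseSetoid X (Jc X ℋ i)) y) =
      {J | J ∈ ℋ i ∧ SeparatesPts X J x y}.ncard :=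
  le_antisymm (dist_le_sepI ℋ hX hhyp i (X.dist x y) x y rfl) (sepI_le_dist ℋ hX hhyp i x y)

end Collapse
end Stmt7Aux

/-- If the hyperplanes of a median graph are partitioned as `⨆ i, ℋ i`, and `πᵢ`
is the projection to the collapse of all hyperplanes *not* in `ℋ i`, then
`d(x,y) = Σᵢ d(πᵢ x, πᵢ y)`. -/
theorem stmt7 (X : SimpleGraph V) (hX : MedianGraph X) {I : Type*}
    (ℋ : I → Set (Set (Sym2 V)))
    (hhyp : ∀ i, ∀ J ∈ ℋ i, IsHyperplane X J)
    (hpart : ∀ J : Set (Sym2 V), IsHyperplane X J → ∃! i : I, J ∈ ℋ i)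
    (x y : V) :
    X.dist x y =
      ∑' i : I, (CollapseGraph X {J | IsHyperplane X J ∧ J ∉ ℋ i}).dist
        (Quotient.mk _ x) (Quotient.mk _ y) := by
  classical
  have htot : X.dist x y = (Stmt7Aux.SepSet X x y).ncard :=
    Stmt7Aux.dist_eq_ncard_sepSet hX x y
  have hkey : ∀ i : I, (CollapseGraph X {J | IsHyperplane X J ∧ J ∉ ℋ i}).dist
      (Quotient.mk _ x) (Quotient.mk _ y) =
      {J | J ∈ ℋ i ∧ SeparatesPts X J x y}.ncard :=
    fun i => Stmt7Aux.dist_collapse_eq ℋ hX hhyp i x y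
  have hfin : (Stmt7Aux.SepSet X x y).Finite := Stmt7Aux.sepSet_finite hX x y
  by_cases hemp : Stmt7Aux.SepSet X x y = ∅
  · have hz : ∀ i : I, (CollapseGraph X {J | IsHyperplane X J ∧ J ∉ ℋ i}).dist
        (Quotient.mk _ x) (Quotient.mk _ y) = 0 := by
      intro i
      rw [hkey i]
      have : {J | J ∈ ℋ i ∧ SeparatesPts X J x y} = ∅ := by
        ext J
        simp only [Set.mem_setOf_eq, Set.mem_empty_iff_false, iff_false, not_and]
        intro hJi hsep
        have : J ∈ Stmt7Aux.SepSet X x y := ⟨hhyp i J hJi, hsep⟩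
        rw [hemp] at this
        exact this
      rw [this]
      simp
    rw [tsum_congr hz, tsum_zero, htot, hemp]
    simp
  · obtain ⟨J₀, hJ₀⟩ := Set.nonempty_iff_ne_empty.mpr hemp
    set T : Finset (Set (Sym2 V)) := hfin.toFinset with hT
    set g : Set (Sym2 V) → I := fun J =>
      if h : IsHyperplane X J then (hpart J h).choose else (hpart J₀ hJ₀.1).choose
      with hg
    have hg1 : ∀ (J : Set (Sym2 V)) (h : IsHyperplane X J), J ∈ ℋ (g J) := by
      intro J h
      rw [hg]
      simp only [dif_pos h]
      exact (hpart J h).choose_spec.1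
    have hg2 : ∀ (J : Set (Sym2 V)) (h : IsHyperplane X J) (i : I), J ∈ ℋ i → g J = i := by
      intro J h i hi
      rw [hg]
      simp only [dif_pos h]
      exact ((hpart J h).choose_spec.2 i hi).symm
    set s : Finset I := T.image g with hs
    have hmemT : ∀ J, J ∈ T ↔ J ∈ Stmt7Aux.SepSet X x y := by
      intro J
      rw [hT, Set.Finite.mem_toFinset]
    have hzero : ∀ i ∉ s, (CollapseGraph X {J | IsHyperplane X J ∧ J ∉ ℋ i}).dist
        (Quotient.mk _ x) (Quotient.mk _ y) = 0 := by
      intro i his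
      rw [hkey i]
      have : {J | J ∈ ℋ i ∧ SeparatesPts X J x y} = ∅ := by
        ext J
        simp only [Set.mem_setOf_eq, Set.mem_empty_iff_false, iff_false, not_and]
        intro hJi hsep
        have hhy : IsHyperplane X J := hhyp i J hJi
        have hJT : J ∈ T := (hmemT J).mpr ⟨hhy, hsep⟩
        have hgs : g J ∈ s := hs ▸ Finset.mem_image_of_mem g hJT
        rw [hg2 J hhy i hJi] at hgs
        exact his hgs
      rw [this]
      simp
    rw [tsum_congr hkey, tsum_eq_sum (s := s) (by
      intro i his
      have := hzero i his
      rw [hkey i] at this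
      exact this)]
    have hfib : ∀ i : I, {J | J ∈ ℋ i ∧ SeparatesPts X J x y} =
        ↑(T.filter fun J => g J = i) := by
      intro i
      ext J
      simp only [Set.mem_setOf_eq, Finset.coe_filter, hmemT J]
      constructor
      · rintro ⟨hJi, hsep⟩
        exact ⟨⟨hhyp i J hJi, hsep⟩, hg2 J (hhyp i J hJi) i hJi⟩
      · rintro ⟨⟨hhy, hsep⟩, hgJ⟩
        refine ⟨?_, hsep⟩
        rw [← hgJ]
        exact hg1 J hhy
    have hsum : T.card = ∑ i ∈ s, (T.filter fun J => g J = i).card :=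
      Finset.card_eq_sum_card_fiberwise (fun J hJ => hs ▸ Finset.mem_image_of_mem g hJ)
    calc X.dist x y = (Stmt7Aux.SepSet X x y).ncard := htot
      _ = T.card := by rw [hT, Set.ncard_eq_toFinset_card _ hfin]
      _ = ∑ i ∈ s, (T.filter fun J => g J = i).card := hsum
      _ = ∑ i ∈ s, {J | J ∈ ℋ i ∧ SeparatesPts X J x y}.ncard := by
          refine Finset.sum_congr rfl fun i _ => ?_
          rw [hfib i, Set.ncard_coe_finset]
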